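/- Suppose α > 0 and β > 0, and let x : ℝ → ℝ be twice continuously differentiable on a neighborhood of 0 with x(0) = α and F(x(ε), ε) = 0 for all ε in that neighborhood. Then x″(0) = (β² + 4α²)/(16·α·β⁶); equivalently, the perturbed inner critical point admits the expansion x(ε) = α + ε/(4β²) + ε²·(β² + 4α²)/(32·α·β⁶) + o(ε²). -/

import Mathlib

open Asymptotics

private lemma peano_aux {h h' : ℝ → ℝ} {V : Set ℝ} (hV : V ∈ nhds (0:ℝ))
    (hd : ∀ t ∈ V, HasDerivAt h (h' t) t) (h0 : h 0 = 0)
    (hd2 : HasDerivAt h' 0 0) (h'0 : h' 0 = 0) :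
    h =o[nhds (0:ℝ)] fun ε : ℝ => ε ^ 2 := by
  rw [Asymptotics.isLittleO_iff]
  intro c hc
  have hlo : (fun t : ℝ => h' t) =o[nhds (0:ℝ)] fun t => t := by
    have := hasDerivAt_iff_isLittleO.mp hd2
    simpa [h'0] using this
  have hev : ∀ᶠ t in nhds (0:ℝ), ‖h' t‖ ≤ c * ‖t‖ := hlo.def hc
  have hmem : ∀ᶠ t in nhds (0:ℝ), t ∈ V := hV
  obtain ⟨r, hr, hball⟩ := Metric.eventually_nhds_iff.mp (hmem.and hev)
  rw [Metric.eventually_nhds_iff]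
  refine ⟨r, hr, fun ε hε => ?_⟩
  simp only [Real.dist_eq, sub_zero] at hε
  have habs : ∀ t : ℝ, |t| ≤ |ε| → t ∈ V ∧ ‖h' t‖ ≤ c * |t| := by
    intro t ht
    have := hball (y := t) (by rw [Real.dist_eq, sub_zero]; exact lt_of_le_of_lt ht hε)
    simpa [Real.norm_eq_abs] using this
  have hnorm : ‖(ε : ℝ) ^ 2‖ = ε ^ 2 := by
    rw [Real.norm_eq_abs, abs_of_nonneg (sq_nonneg ε)]
  rcases le_or_gt 0 ε with h1 | h1
  · have key := norm_image_sub_le_of_norm_deriv_le_segment' (f := h) (f' := h')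
      (a := 0) (b := ε) (C := c * |ε|)
      (fun t ht => (hd t (habs t (by
        rw [abs_of_nonneg ht.1, abs_of_nonneg h1]; exact ht.2)).1).hasDerivWithinAt)
      (fun t ht => by
        have h2 := (habs t (by
          rw [abs_of_nonneg ht.1, abs_of_nonneg h1]; exact le_of_lt ht.2)).2
        refine h2.trans ?_
        have : |t| ≤ |ε| := by
          rw [abs_of_nonneg ht.1, abs_of_nonneg h1]; exact le_of_lt ht.2
        nlinarith [abs_nonneg t])
      ε (Set.right_mem_Icc.2 h1)
    rw [h0, sub_zero] at key
    rw [hnorm]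
    calc ‖h ε‖ ≤ c * |ε| * (ε - 0) := key
    _ = c * ε ^ 2 := by rw [abs_of_nonneg h1]; ring
  · have key := norm_image_sub_le_of_norm_deriv_le_segment' (f := h) (f' := h')
      (a := ε) (b := 0) (C := c * |ε|)
      (fun t ht => (hd t (habs t (by
        rw [abs_of_nonpos ht.2, abs_of_nonpos (le_of_lt h1)]; linarith [ht.1])).1).hasDerivWithinAt)
      (fun t ht => by
        have hta : |t| ≤ |ε| := by
          rw [abs_of_nonpos (le_of_lt ht.2), abs_of_nonpos (le_of_lt h1)]; linarith [ht.1]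
        have h2 := (habs t hta).2
        refine h2.trans ?_
        nlinarith [abs_nonneg t])
      0 (Set.right_mem_Icc.2 (le_of_lt h1))
    rw [h0] at key
    rw [hnorm]
    have : ‖h ε‖ = ‖0 - h ε‖ := by rw [zero_sub, norm_neg]
    rw [this]
    calc ‖0 - h ε‖ ≤ c * |ε| * (0 - ε) := key
    _ = c * ε ^ 2 := by rw [abs_of_nonpos (le_of_lt h1)]; ring

/-- if `x(ε)` is a twice continuously differentiable branch of
critical points of the asymmetric butterfly potential with `x(0) = α`, then
`x″(0) = (β² + 4α²)/(16αβ⁶)`; equivalently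
`x(ε) = α + ε/(4β²) + ε²·(β² + 4α²)/(32αβ⁶) + o(ε²)`. -/
theorem stmt11 (α β : ℝ) (hα : 0 < α) (hβ : 0 < β)
    (F : ℝ → ℝ → ℝ)
    (hF : ∀ x ε : ℝ, F x ε =
      6 * x * (x ^ 2 - α ^ 2) * (x ^ 2 - α ^ 2 - β ^ 2) + 3 * ε * x ^ 2)
    (x : ℝ → ℝ) (U : Set ℝ) (hU : U ∈ nhds (0 : ℝ))
    (hx : ContDiffOn ℝ 2 x U) (hx0 : x 0 = α)
    (hroot : ∀ ε ∈ U, F (x ε) ε = 0) :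
    deriv (deriv x) 0 = (β ^ 2 + 4 * α ^ 2) / (16 * α * β ^ 6) ∧
    (fun ε : ℝ => x ε -
        (α + ε / (4 * β ^ 2) + ε ^ 2 * (β ^ 2 + 4 * α ^ 2) / (32 * α * β ^ 6)))
      =o[nhds 0] (fun ε : ℝ => ε ^ 2) := by
  have hα' : α ≠ 0 := ne_of_gt hα
  have hβ' : β ≠ 0 := ne_of_gt hβ
  set V : Set ℝ := interior U with hVdef
  have hVopen : IsOpen V := isOpen_interior
  have h0V : (0 : ℝ) ∈ V := mem_interior_iff_mem_nhds.2 hU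
  have hVnhds : V ∈ nhds (0 : ℝ) := hVopen.mem_nhds h0V
  have hxV : ContDiffOn ℝ 2 x V := hx.mono interior_subset
  have hx1 : DifferentiableOn ℝ x V := hxV.differentiableOn (by norm_num)
  have hdx : ∀ t ∈ V, HasDerivAt x (deriv x t) t := fun t ht =>
    ((hx1 t ht).differentiableAt (hVopen.mem_nhds ht)).hasDerivAt
  have hd1 : ContDiffOn ℝ 1 (deriv x) V :=
    hxV.deriv_of_isOpen hVopen (by norm_num)
  have hdx2 : HasDerivAt (deriv x) (deriv (deriv x) 0) 0 :=
    (((hd1.differentiableOn (by norm_num)) 0 h0V).differentiableAt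
      (hVopen.mem_nhds h0V)).hasDerivAt
  set c1 : ℝ := deriv x 0 with hc1def
  set c2 : ℝ := deriv (deriv x) 0 with hc2def
  -- the implicit function
  set g : ℝ → ℝ := fun ε => 6 * x ε * (x ε ^ 2 - α ^ 2) * (x ε ^ 2 - α ^ 2 - β ^ 2)
      + 3 * ε * x ε ^ 2 with hgdef
  have hg0 : g =ᶠ[nhds (0:ℝ)] (fun _ => 0) := by
    filter_upwards [hU] with ε hε
    rw [hgdef]
    simp only
    rw [← hF]
    exact hroot ε hε
  -- first derivative of g
  set Q : ℝ → ℝ := fun t => 6 * (x t ^ 2 - α ^ 2) * (x t ^ 2 - α ^ 2 - β ^ 2)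
      + 12 * x t ^ 2 * (x t ^ 2 - α ^ 2 - β ^ 2) + 12 * x t ^ 2 * (x t ^ 2 - α ^ 2)
      + 6 * t * x t with hQdef
  set d : ℝ → ℝ := fun t => Q t * deriv x t + 3 * x t ^ 2 with hddef
  have hg' : ∀ t ∈ V, HasDerivAt g (d t) t := by
    intro t ht
    have hx' := hdx t ht
    have h1 : HasDerivAt (fun ε => x ε ^ 2) ((2:ℕ) * x t ^ 1 * deriv x t) t := hx'.pow 2
    have hchain := ((((hx'.const_mul 6)).mul (h1.sub_const (α^2))).mul
        ((h1.sub_const (α^2)).sub_const (β^2))).add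
        ((((hasDerivAt_id t).const_mul 3)).mul h1)
    refine hchain.congr_deriv ?_
    rw [hddef, hQdef]
    simp only [id_eq, Pi.mul_apply, Pi.add_apply]
    push_cast
    ring
  have hdg : d =ᶠ[nhds (0:ℝ)] (fun _ => 0) := by
    have h1 : deriv g =ᶠ[nhds (0:ℝ)] deriv (fun _ : ℝ => (0:ℝ)) := hg0.deriv
    have h2 : ∀ᶠ t in nhds (0:ℝ), t ∈ V := hVnhds
    filter_upwards [h1, h2] with t h1t h2t
    rw [← (hg' t h2t).deriv, h1t, deriv_const]
  -- the equation at order 1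
  have eq1 : -(12 * α^2 * β^2) * c1 + 3 * α^2 = 0 := by
    have := hdg.eq_of_nhds
    rw [hddef, hQdef] at this
    simp only [hx0] at this
    rw [← hc1def] at this
    linarith [this]
  have h2 : c1 * (4 * β ^ 2) = 1 :=
    mul_right_cancel₀ (b := 3 * α ^ 2) (by positivity) (by linear_combination -eq1)
  have hc1 : c1 = 1 / (4 * β ^ 2) := by
    rw [eq_div_iff (by positivity : (4:ℝ) * β ^ 2 ≠ 0)]
    exact h2
  -- the equation at order 2
  have hderiv_d : deriv d 0 = 0 := by
    rw [hdg.deriv_eq, deriv_const]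
  have hx'0 : HasDerivAt x c1 0 := hdx 0 h0V
  have h1₀ : HasDerivAt (fun t => x t ^ 2) ((2:ℕ) * x 0 ^ 1 * c1) 0 := hx'0.pow 2
  set E : ℝ := 48 * α^3 * c1^2 - 36 * α * β^2 * c1^2 + 12 * α * c1
      - 12 * α^2 * β^2 * c2 with hEdef
  have hdE : HasDerivAt d E 0 := by
    have s1 := h1₀.sub_const (α^2)
    have s2 := s1.sub_const (β^2)
    have t1 := (s1.const_mul 6).mul s2
    have t2 := (h1₀.const_mul 12).mul s2
    have t3 := (h1₀.const_mul 12).mul s1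
    have t4 := ((hasDerivAt_id (0:ℝ)).const_mul 6).mul hx'0
    have hQ' := ((t1.add t2).add t3).add t4
    have hchain := (hQ'.mul hdx2).add (h1₀.const_mul 3)
    refine hchain.congr_deriv ?_
    simp only [hx0, id_eq, Pi.mul_apply, Pi.add_apply, ← hc1def]
    rw [hEdef]
    push_cast
    ring
  have eq2 : E = 0 := by rw [← hdE.deriv, hderiv_d]
  have hc2 : c2 = (β ^ 2 + 4 * α ^ 2) / (16 * α * β ^ 6) := by
    rw [hEdef, hc1] at eq2
    rw [eq_div_iff (by positivity : (16:ℝ) * α * β ^ 6 ≠ 0)]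
    have h3 : (c2 * (16 * α * β ^ 6) - (β ^ 2 + 4 * α ^ 2)) * (12 * α * β ^ 2) = 0 := by
      field_simp at eq2
      linear_combination (-β^2) * eq2
    have h4 := mul_eq_zero.mp h3
    rcases h4 with h4 | h4
    · linarith [sub_eq_zero.mp h4]
    · exfalso; have : (0:ℝ) < 12 * α * β ^ 2 := by positivity
      linarith
  refine ⟨hc2, ?_⟩
  -- little-o part
  set K : ℝ := (β ^ 2 + 4 * α ^ 2) / (32 * α * β ^ 6) with hKdef
  have hc2K : c2 = 2 * K := by
    rw [hc2, hKdef]; field_simp; ring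
  have hgoal : (fun ε : ℝ => x ε -
      (α + ε / (4 * β ^ 2) + ε ^ 2 * (β ^ 2 + 4 * α ^ 2) / (32 * α * β ^ 6)))
      = fun ε : ℝ => x ε - (α + ε * c1 + ε ^ 2 * K) := by
    funext ε
    rw [hc1, hKdef]
    ring
  rw [hgoal]
  apply peano_aux (h' := fun t => deriv x t - (c1 + 2 * t * K)) hVnhds
  · intro t ht
    have hp : HasDerivAt (fun ε : ℝ => α + ε * c1 + ε ^ 2 * K) (c1 + 2 * t * K) t := by
      have := (((hasDerivAt_id t).mul_const c1).const_add α).add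
        ((hasDerivAt_pow 2 t).mul_const K)
      refine this.congr_deriv ?_
      push_cast; ring
    exact (hdx t ht).sub hp
  · simp [hx0]
  · have hp2 : HasDerivAt (fun t : ℝ => c1 + 2 * t * K) (2 * K) 0 := by
      have := ((((hasDerivAt_id (0:ℝ)).const_mul 2).mul_const K).const_add c1)
      refine this.congr_deriv ?_
      norm_num
    have := hdx2.sub hp2
    rw [hc2K] at this
    exact this.congr_deriv (sub_self _)
  · simp [hc1def]
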